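/- Let n ≥ 4 and R_n = ℤ[x₁^{±1},…,x_n^{±1}], σ_i = x_i − 1, and let i, j, k ≠ 1 be distinct indices. For any f ∈ R_n and m ∈ ℕ, the commutator [(I_n + f(σ_ie_{1,j} − σ_je_{1,i}))^{−1}, (I_n + x_kE_{1,1} − E_{1,1} − σ_1E_{1,k})^m] equals I_n + (x_k^m − 1)f(σ_iE_{1,j} − σ_jE_{1,i}). -/

import Mathlib

open Matrix

/-- The Laurent polynomial ring `R_n = ℤ[x₁^{±1},…,x_n^{±1}] = ℤ[ℤⁿ]`. -/
abbrev Rn (n : ℕ) := AddMonoidAlgebra ℤ (Fin n →₀ ℤ)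

/-- The variable `x_i` of `R_n`. -/
noncomputable def Xv {n : ℕ} (i : Fin n) : Rn n :=
  AddMonoidAlgebra.single (Finsupp.single i 1) 1

/-- `σ_i = x_i - 1`. -/
noncomputable def sg {n : ℕ} (i : Fin n) : Rn n := Xv i - 1

/-- Auxiliary: the matrix which is the identity except that `v` has been added to row `z`. -/
noncomputable def Mz {n : ℕ} (z : Fin n) (v : Fin n → Rn n) : Matrix (Fin n) (Fin n) (Rn n) :=
  1 + Matrix.of (fun r c => if r = z then v c else 0)

lemma Mz_mul {n : ℕ} (z : Fin n) (v w : Fin n → Rn n) :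
    Mz z v * Mz z w = Mz z (v + w + v z • w) := by
  unfold Mz
  ext r c
  simp only [Matrix.add_apply, Matrix.mul_apply, Matrix.one_apply, Matrix.of_apply,
    Pi.add_apply, Pi.smul_apply, smul_eq_mul, ite_mul, mul_ite, zero_mul, mul_zero,
    add_mul, mul_add]
  rw [Finset.sum_add_distrib]
  by_cases hr : r = z <;>
    simp [hr, Finset.sum_ite_eq, Finset.sum_ite_eq', Matrix.one_apply, eq_comm] <;> ring

lemma Mz_zero {n : ℕ} (z : Fin n) : Mz z 0 = 1 := by
  unfold Mz
  ext r c : 2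
  simp

lemma Mz_repr {n : ℕ} (z c c' : Fin n) (a b : Rn n) :
    (1 : Matrix (Fin n) (Fin n) (Rn n)) + Matrix.single z c a
      - Matrix.single z c' b = Mz z (Pi.single c a - Pi.single c' b) := by
  unfold Mz
  ext r d : 2
  simp only [Matrix.sub_apply, Matrix.add_apply, Matrix.single, Matrix.of_apply,
    Pi.sub_apply, Pi.single_apply]
  by_cases hr : r = z <;> by_cases h1 : d = c <;> by_cases h2 : d = c' <;>
    simp_all [eq_comm] <;> abel

/-- For `n ≥ 4` and distinct indices `i, j, k` different from the first index: the
commutator `[(I_n + f(σ_ie_{1,j} − σ_je_{1,i}))⁻¹, (I_n + x_kE_{1,1} − E_{1,1} − σ_1E_{1,k})^m]`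
equals `I_n + (x_k^m − 1)f(σ_iE_{1,j} − σ_jE_{1,i})`. -/
theorem commutator_with_power (n : ℕ) (hn : 4 ≤ n) (i j k : Fin n) (f : Rn n) (m : ℕ)
    (hij : i ≠ j) (hik : i ≠ k) (hjk : j ≠ k)
    (hi : i ≠ (⟨0, by omega⟩ : Fin n)) (hj : j ≠ (⟨0, by omega⟩ : Fin n))
    (hk : k ≠ (⟨0, by omega⟩ : Fin n))
    (NU PU : (Matrix (Fin n) (Fin n) (Rn n))ˣ)
    (hN : (NU : Matrix (Fin n) (Fin n) (Rn n)) =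
      1 + Matrix.single (⟨0, by omega⟩ : Fin n) j (f * sg i)
        - Matrix.single (⟨0, by omega⟩ : Fin n) i (f * sg j))
    (hP : (PU : Matrix (Fin n) (Fin n) (Rn n)) =
      1 + Matrix.single (⟨0, by omega⟩ : Fin n) (⟨0, by omega⟩ : Fin n) (Xv k - 1)
        - Matrix.single (⟨0, by omega⟩ : Fin n) k (sg (⟨0, by omega⟩ : Fin n))) :
    ((NU⁻¹ * PU ^ m * NU * (PU ^ m)⁻¹ : (Matrix (Fin n) (Fin n) (Rn n))ˣ)
        : Matrix (Fin n) (Fin n) (Rn n)) =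
      1 + Matrix.single (⟨0, by omega⟩ : Fin n) j ((Xv k ^ m - 1) * f * sg i)
        - Matrix.single (⟨0, by omega⟩ : Fin n) i ((Xv k ^ m - 1) * f * sg j) := by
  set z : Fin n := ⟨0, by omega⟩ with hz
  rw [Mz_repr] at hN hP ⊢
  set vN : Fin n → Rn n := Pi.single j (f * sg i) - Pi.single i (f * sg j) with hvN
  have hvNz : vN z = 0 := by
    rw [hvN]
    simp only [Pi.sub_apply, Pi.single_eq_of_ne (Ne.symm hj), Pi.single_eq_of_ne (Ne.symm hi),
      sub_zero]
  -- powers of P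
  have hPm : ((PU ^ m : (Matrix (Fin n) (Fin n) (Rn n))ˣ) : Matrix (Fin n) (Fin n) (Rn n)) =
      Mz z (Pi.single z (Xv k ^ m - 1)
        - Pi.single k ((∑ l ∈ Finset.range m, Xv k ^ l) * sg z)) := by
    induction m with
    | zero =>
      have h0 : (Pi.single z (Xv k ^ 0 - 1) : Fin n → Rn n)
          - Pi.single k ((∑ l ∈ Finset.range 0, Xv k ^ l) * sg z) = 0 := by
        funext x
        simp [Pi.single_apply]
      rw [pow_zero, Units.val_one, h0, Mz_zero]
    | succ m ih =>
      rw [pow_succ, Units.val_mul, ih, hP, Mz_mul]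
      refine congrArg (Mz z) (funext fun x => ?_)
      simp only [Pi.add_apply, Pi.sub_apply, Pi.smul_apply, smul_eq_mul,
        Pi.single_eq_same, Pi.single_eq_of_ne (Ne.symm hk)]
      by_cases hxz : x = z
      · subst hxz
        simp only [Pi.single_eq_same, Pi.single_eq_of_ne (Ne.symm hk)]
        ring
      · by_cases hxk : x = k
        · subst hxk
          simp only [Pi.single_eq_same, Pi.single_eq_of_ne hk]
          rw [geom_sum_succ']
          ring
        · simp only [Pi.single_eq_of_ne hxz, Pi.single_eq_of_ne hxk]
          ring
  -- inverse of N
  have hNinv : ((NU⁻¹ : (Matrix (Fin n) (Fin n) (Rn n))ˣ) : Matrix (Fin n) (Fin n) (Rn n)) =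
      Mz z (-vN) := by
    have hmul : (NU : Matrix (Fin n) (Fin n) (Rn n)) * Mz z (-vN) = 1 := by
      rw [hN, Mz_mul, hvNz]
      have hv0 : vN + -vN + (0 : Rn n) • (-vN) = 0 := by simp
      rw [hv0, Mz_zero]
    calc ((NU⁻¹ : (Matrix (Fin n) (Fin n) (Rn n))ˣ) : Matrix (Fin n) (Fin n) (Rn n))
        = ((NU⁻¹ : (Matrix (Fin n) (Fin n) (Rn n))ˣ) : Matrix (Fin n) (Fin n) (Rn n)) *
            ((NU : Matrix (Fin n) (Fin n) (Rn n)) * Mz z (-vN)) := by rw [hmul, mul_one]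
      _ = Mz z (-vN) := by
          rw [← mul_assoc, ← Units.val_mul, inv_mul_cancel, Units.val_one, one_mul]
  -- key computation
  have key : ((NU⁻¹ : (Matrix (Fin n) (Fin n) (Rn n))ˣ) : Matrix (Fin n) (Fin n) (Rn n)) *
      ((PU ^ m : (Matrix (Fin n) (Fin n) (Rn n))ˣ) : Matrix (Fin n) (Fin n) (Rn n)) *
      (NU : Matrix (Fin n) (Fin n) (Rn n)) =
      Mz z (Pi.single j ((Xv k ^ m - 1) * f * sg i)
        - Pi.single i ((Xv k ^ m - 1) * f * sg j)) *
      ((PU ^ m : (Matrix (Fin n) (Fin n) (Rn n))ˣ) : Matrix (Fin n) (Fin n) (Rn n)) := by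
    rw [hNinv, hPm, hN, Mz_mul, Mz_mul, Mz_mul]
    refine congrArg (Mz z) (funext fun x => ?_)
    simp only [hvN, Pi.add_apply, Pi.sub_apply, Pi.neg_apply, Pi.smul_apply, smul_eq_mul,
      Pi.single_eq_same, Pi.single_eq_of_ne (Ne.symm hj), Pi.single_eq_of_ne (Ne.symm hi),
      Pi.single_eq_of_ne (Ne.symm hk)]
    by_cases hxz : x = z
    · subst hxz
      simp only [Pi.single_eq_same, Pi.single_eq_of_ne (Ne.symm hj),
        Pi.single_eq_of_ne (Ne.symm hi), Pi.single_eq_of_ne (Ne.symm hk)]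
      ring
    · by_cases hxk : x = k
      · subst hxk
        simp only [Pi.single_eq_same, Pi.single_eq_of_ne (Ne.symm hjk),
          Pi.single_eq_of_ne (Ne.symm hik), Pi.single_eq_of_ne hk]
        ring
      · by_cases hxj : x = j
        · subst hxj
          simp only [Pi.single_eq_same, Pi.single_eq_of_ne (Ne.symm hij),
            Pi.single_eq_of_ne hj, Pi.single_eq_of_ne hjk]
          ring
        · by_cases hxi : x = i
          · subst hxi
            simp only [Pi.single_eq_same, Pi.single_eq_of_ne hij,
              Pi.single_eq_of_ne hi, Pi.single_eq_of_ne hik]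
            ring
          · simp only [Pi.single_eq_of_ne hxz, Pi.single_eq_of_ne hxk,
              Pi.single_eq_of_ne hxj, Pi.single_eq_of_ne hxi]
            ring
  calc ((NU⁻¹ * PU ^ m * NU * (PU ^ m)⁻¹ : (Matrix (Fin n) (Fin n) (Rn n))ˣ)
        : Matrix (Fin n) (Fin n) (Rn n))
      = ((NU⁻¹ : (Matrix (Fin n) (Fin n) (Rn n))ˣ) : Matrix (Fin n) (Fin n) (Rn n)) *
        ((PU ^ m : (Matrix (Fin n) (Fin n) (Rn n))ˣ) : Matrix (Fin n) (Fin n) (Rn n)) *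
        (NU : Matrix (Fin n) (Fin n) (Rn n)) *
        (((PU ^ m)⁻¹ : (Matrix (Fin n) (Fin n) (Rn n))ˣ) : Matrix (Fin n) (Fin n) (Rn n)) := by
        simp [Units.val_mul]
    _ = Mz z (Pi.single j ((Xv k ^ m - 1) * f * sg i)
          - Pi.single i ((Xv k ^ m - 1) * f * sg j)) *
        (((PU ^ m : (Matrix (Fin n) (Fin n) (Rn n))ˣ) : Matrix (Fin n) (Fin n) (Rn n)) *
         (((PU ^ m)⁻¹ : (Matrix (Fin n) (Fin n) (Rn n))ˣ) : Matrix (Fin n) (Fin n) (Rn n))) := by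
        rw [key, mul_assoc]
    _ = Mz z (Pi.single j ((Xv k ^ m - 1) * f * sg i)
          - Pi.single i ((Xv k ^ m - 1) * f * sg j)) := by
        rw [← Units.val_mul, mul_inv_cancel, Units.val_one, mul_one]
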